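/- Let B(Q) = 1/2 + (1/2)√(Q(1 − 3Q/2)) − (√2/4)(1 − 3Q). Then for all Q ∈ [0, 1/6], B(Q) ≤ 1/2, B is increasing on [0, 1/6], and B(1/6) = 1/2. -/
import Mathlib


/-- The SARG two-photon phase-error bound `B(Q) = 1/2 + (1/2)√(Q(1 − 3Q/2)) − (√2/4)(1 − 3Q)`. -/
noncomputable def Bsarg (Q : ℝ) : ℝ :=
  1 / 2 + (1 / 2) * Real.sqrt (Q * (1 - 3 * Q / 2)) - (Real.sqrt 2 / 4) * (1 - 3 * Q)

/-- For all `Q ∈ [0, 1/6]`: `B(Q) ≤ 1/2`, `B` is increasing on `[0, 1/6]`, and `B(1/6) = 1/2`. -/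
theorem Bsarg_properties :
    (∀ Q ∈ Set.Icc (0 : ℝ) (1 / 6), Bsarg Q ≤ 1 / 2) ∧
    StrictMonoOn Bsarg (Set.Icc (0 : ℝ) (1 / 6)) ∧
    Bsarg (1 / 6) = 1 / 2 := by
  have h2 : (0:ℝ) ≤ Real.sqrt 2 := Real.sqrt_nonneg 2
  have hs : Real.sqrt 2 ^ 2 = 2 := Real.sq_sqrt (by norm_num)
  refine ⟨?_, ?_, ?_⟩
  · rintro Q ⟨hQ0, hQ1⟩
    have hkey : Real.sqrt (Q * (1 - 3 * Q / 2)) ≤ Real.sqrt 2 / 2 * (1 - 3 * Q) := by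
      rw [show Real.sqrt 2 / 2 * (1 - 3 * Q)
          = Real.sqrt ((Real.sqrt 2 / 2 * (1 - 3 * Q)) ^ 2) from
          (Real.sqrt_sq (by nlinarith)).symm]
      apply Real.sqrt_le_sqrt
      nlinarith
    simp only [Bsarg]
    nlinarith
  · intro a ha b hb hab
    obtain ⟨ha0, ha1⟩ := ha
    obtain ⟨hb0, hb1⟩ := hb
    have hf : a * (1 - 3 * a / 2) < b * (1 - 3 * b / 2) := by nlinarith
    have hfa : 0 ≤ a * (1 - 3 * a / 2) := by nlinarith
    have hsq : Real.sqrt (a * (1 - 3 * a / 2)) < Real.sqrt (b * (1 - 3 * b / 2)) :=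
      Real.sqrt_lt_sqrt hfa hf
    simp only [Bsarg]
    nlinarith
  · have : (1:ℝ)/6 * (1 - 3 * (1/6) / 2) = (Real.sqrt 2 / 4) ^ 2 := by nlinarith
    simp only [Bsarg, this, Real.sqrt_sq (by positivity : (0:ℝ) ≤ Real.sqrt 2 / 4)]
    nlinarith
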